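/- arXiv:2503.12696 — 2 statements merged into one kernel-verified Lean document; each statement's English description precedes it below -/
import Mathlib

section
/- Fix nonzero real parameters a and c, and let A : ℕ×ℕ → ℝ satisfy: A(0,0) = c and A(0,k) = 0 for k ≥ 1; for m ≥ 1: A(m,0) = 0, A(m,k) = 0 for k > 2m, A(m,2m) = (3a/2)^m · c/m!, and A(m,k) = ((k+1)/3)·A(m,k+1) + (3a/k)·A(m−1,k−2) for 1 ≤ k ≤ 2m−1, with the last term taken to be 0 when k < 2. For z > 0 set ζ = (z/2)^{1/3} and V_0(z) = (5 − 36ζ⁴)/(144ζ⁶). Define ψ_0 = 0 and, for n ∈ ℤ∖{0} with δ = sgn(n), ψ_n(z) = ζ^{1/2} exp(−(3/2)δζ²) · Σ_{k=0}^{2|n|−2} A(|n|−1, k) δ^k ζ^{2k}. Then for every n ∈ ℤ∖{0} and every z > 0 (derivatives with respect to z): ψ_n″(z) + V_0(z) ψ_n(z) = −δ a ψ_{n−δ}(z). -/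
open Real Filter Topology Finset

noncomputable section JordanAux

def Efun (δ v : ℝ) : ℝ := Real.exp (-(3 / 2) * δ * v ^ 2)
def Ssum (aa : ℕ → ℝ) (N : ℕ) (v : ℝ) : ℝ := ∑ k ∈ Finset.range N, aa k * v ^ (2 * k)
def S1sum (aa : ℕ → ℝ) (N : ℕ) (v : ℝ) : ℝ :=
  ∑ k ∈ Finset.range N, aa k * ((2 * k : ℕ) : ℝ) * v ^ (2 * k - 1)
def S2sum (aa : ℕ → ℝ) (N : ℕ) (v : ℝ) : ℝ :=
  ∑ k ∈ Finset.range N, aa k * ((2 * k : ℕ) : ℝ) * ((2 * k - 1 : ℕ) : ℝ) * v ^ (2 * k - 2)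

lemma hasDerivAt_Ssum (aa : ℕ → ℝ) (N : ℕ) (v : ℝ) :
    HasDerivAt (Ssum aa N) (S1sum aa N v) v := by
  refine HasDerivAt.fun_sum fun k _ => ?_
  have h := (hasDerivAt_pow (2 * k) v).const_mul (aa k)
  simpa [mul_assoc] using h

lemma hasDerivAt_S1sum (aa : ℕ → ℝ) (N : ℕ) (v : ℝ) :
    HasDerivAt (S1sum aa N) (S2sum aa N v) v := by
  refine HasDerivAt.fun_sum fun k _ => ?_
  have h := (hasDerivAt_pow (2 * k - 1) v).const_mul (aa k * ((2 * k : ℕ) : ℝ))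
  have e : 2 * k - 1 - 1 = 2 * k - 2 := by omega
  rw [e] at h
  simpa [mul_assoc] using h

lemma hasDerivAt_Efun (δ v : ℝ) :
    HasDerivAt (Efun δ) (-(3 * δ * v) * Efun δ v) v := by
  have h := ((hasDerivAt_pow 2 v).const_mul (-(3 / 2) * δ)).exp
  refine h.congr_deriv ?_
  unfold Efun
  ring


def Fpoly (δ : ℝ) (aa : ℕ → ℝ) (N : ℕ) (v : ℝ) : ℝ :=
  (1 / 2) * v ^ ((1:ℝ) / 2 - 1) * Ssum aa N v
    + v ^ ((1:ℝ) / 2) * (S1sum aa N v - 3 * δ * v * Ssum aa N v)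

def Fpoly' (δ : ℝ) (aa : ℕ → ℝ) (N : ℕ) (v : ℝ) : ℝ :=
  (1 / 2) * (((1:ℝ) / 2 - 1) * v ^ ((1:ℝ) / 2 - 1 - 1)) * Ssum aa N v
    + (1 / 2) * v ^ ((1:ℝ) / 2 - 1) * S1sum aa N v
    + (1 / 2) * v ^ ((1:ℝ) / 2 - 1) * (S1sum aa N v - 3 * δ * v * Ssum aa N v)
    + v ^ ((1:ℝ) / 2) * (S2sum aa N v - (3 * δ * Ssum aa N v + 3 * δ * v * S1sum aa N v))

def G0 (δ : ℝ) (aa : ℕ → ℝ) (N : ℕ) (v : ℝ) : ℝ := v ^ ((1:ℝ) / 2) * Efun δ v * Ssum aa N v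
def G1 (δ : ℝ) (aa : ℕ → ℝ) (N : ℕ) (v : ℝ) : ℝ := Efun δ v * Fpoly δ aa N v
def G2 (δ : ℝ) (aa : ℕ → ℝ) (N : ℕ) (v : ℝ) : ℝ :=
  -(3 * δ * v) * Efun δ v * Fpoly δ aa N v + Efun δ v * Fpoly' δ aa N v

lemma hasDerivAt_G0 (δ : ℝ) (aa : ℕ → ℝ) (N : ℕ) (v : ℝ) (hv : v ≠ 0) :
    HasDerivAt (G0 δ aa N) (G1 δ aa N v) v := by
  have h := ((Real.hasDerivAt_rpow_const (p := (1:ℝ)/2) (Or.inl hv)).mul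
    (hasDerivAt_Efun δ v)).mul (hasDerivAt_Ssum aa N v)
  refine h.congr_deriv ?_
  unfold G1 Fpoly
  simp only [Pi.mul_apply, Pi.sub_apply]
  ring

lemma hasDerivAt_Fpoly (δ : ℝ) (aa : ℕ → ℝ) (N : ℕ) (v : ℝ) (hv : v ≠ 0) :
    HasDerivAt (Fpoly δ aa N) (Fpoly' δ aa N v) v := by
  have h1 := ((Real.hasDerivAt_rpow_const (p := (1:ℝ)/2 - 1) (Or.inl hv)).const_mul
    (1/2 : ℝ)).mul (hasDerivAt_Ssum aa N v)
  have h2 := (Real.hasDerivAt_rpow_const (p := (1:ℝ)/2) (Or.inl hv)).mul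
    ((hasDerivAt_S1sum aa N v).sub
      (((hasDerivAt_id v).const_mul (3*δ)).mul (hasDerivAt_Ssum aa N v)))
  have h := h1.add h2
  simp only [id_eq] at h
  refine h.congr_deriv ?_
  unfold Fpoly'
  simp only [Pi.mul_apply, Pi.sub_apply]
  ring

lemma hasDerivAt_G1 (δ : ℝ) (aa : ℕ → ℝ) (N : ℕ) (v : ℝ) (hv : v ≠ 0) :
    HasDerivAt (G1 δ aa N) (G2 δ aa N v) v := by
  have h := (hasDerivAt_Efun δ v).mul (hasDerivAt_Fpoly δ aa N v hv)
  exact h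


lemma sum_ext {M M' : ℕ} (f : ℕ → ℝ) (h : M ≤ M') (hf : ∀ k, M ≤ k → f k = 0) :
    ∑ k ∈ Finset.range M', f k = ∑ k ∈ Finset.range M, f k :=
  (Finset.sum_subset (Finset.range_subset_range.2 h)
    (fun x _ hx => hf x (by simpa using hx))).symm

lemma key_identity (a c : ℝ) (A : ℕ → ℕ → ℝ)
    (hA00 : A 0 0 = c) (hA0k : ∀ k : ℕ, 1 ≤ k → A 0 k = 0)
    (hAtop : ∀ m : ℕ, 1 ≤ m → ∀ k : ℕ, 2 * m < k → A m k = 0)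
    (hAlead : ∀ m : ℕ, 1 ≤ m → A m (2 * m) = (3 * a / 2) ^ m * c / Nat.factorial m)
    (hArec : ∀ m : ℕ, 1 ≤ m → ∀ k : ℕ, 1 ≤ k → k ≤ 2 * m - 1 →
      A m k = (((k : ℝ) + 1) / 3) * A m (k + 1)
        + (if k < 2 then 0 else (3 * a / (k : ℝ)) * A (m - 1) (k - 2)))
    (m : ℕ) (δ : ℝ) (hδ2 : δ ^ 2 = 1) (v : ℝ) :
    v * S2sum (fun k => A m k * δ ^ k) (2 * m + 1) v
      - S1sum (fun k => A m k * δ ^ k) (2 * m + 1) v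
      - 6 * δ * v ^ 2 * S1sum (fun k => A m k * δ ^ k) (2 * m + 1) v
      + 36 * δ * a * v ^ 5 * Ssum (fun k => A (m - 1) k * δ ^ k) (2 * m - 1) v = 0 := by
  rcases Nat.eq_zero_or_pos m with hm | hm
  · subst hm
    simp [S1sum, S2sum, Ssum]
  -- notation
  set aa : ℕ → ℝ := fun k => A m k * δ ^ k with haa
  set at' : ℕ → ℝ := fun k => A (m - 1) k * δ ^ k with hat
  have haa0 : ∀ k, 2 * m + 1 ≤ k → aa k = 0 := fun k hk => by
    simp [haa, hAtop m hm k (by omega)]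
  have hat0 : ∀ k, 2 * m - 1 ≤ k → at' k = 0 := fun k hk => by
    rcases Nat.eq_or_lt_of_le hm with h1 | h1
    · simp [hat, ← h1, hA0k k (by omega)]
    · simp [hat, hAtop (m - 1) (by omega) k (by omega)]
  have hp : ∀ t : ℕ, δ ^ (t + 2) = δ ^ t := fun t => by rw [pow_add, hδ2, mul_one]
  -- step 1 : v * S2
  have step1 : v * S2sum aa (2 * m + 1) v
      = ∑ j ∈ Finset.range (2 * m + 2),
          aa (j + 1) * ((2 * (j + 1) : ℕ) : ℝ) * ((2 * (j + 1) - 1 : ℕ) : ℝ) * v ^ (2 * j + 1) := by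
    have e1 : v * S2sum aa (2 * m + 1) v
        = ∑ k ∈ Finset.range (2 * m + 1),
            aa k * ((2 * k : ℕ) : ℝ) * ((2 * k - 1 : ℕ) : ℝ) * v ^ (2 * k - 1) := by
      rw [S2sum, Finset.mul_sum]
      refine Finset.sum_congr rfl fun k _ => ?_
      rcases k with _ | k
      · simp
      · rw [show 2 * (k + 1) - 1 = (2 * (k + 1) - 2) + 1 from by omega, pow_succ]
        ring
    rw [e1, sum_ext _ (by omega : 2 * m + 1 ≤ 2 * m + 3)
        (fun k hk => by simp [haa0 k (by omega)]) |>.symm,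
      Finset.sum_range_succ']
    simp only [Nat.mul_zero, Nat.zero_sub, Nat.cast_zero, mul_zero, zero_mul, add_zero,
      Nat.cast_ofNat, pow_zero]
    refine Finset.sum_congr rfl fun j _ => ?_
    rw [show 2 * (j + 1) - 1 = 2 * j + 1 from by omega]
  -- step 2 : S1
  have step2 : S1sum aa (2 * m + 1) v
      = ∑ j ∈ Finset.range (2 * m + 2),
          aa (j + 1) * ((2 * (j + 1) : ℕ) : ℝ) * v ^ (2 * j + 1) := by
    have e1 : S1sum aa (2 * m + 1) v
        = ∑ k ∈ Finset.range (2 * m + 1), aa k * ((2 * k : ℕ) : ℝ) * v ^ (2 * k - 1) := rfl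
    rw [e1, sum_ext _ (by omega : 2 * m + 1 ≤ 2 * m + 3)
        (fun k hk => by simp [haa0 k (by omega)]) |>.symm,
      Finset.sum_range_succ']
    have : ∀ j : ℕ, 2 * (j + 1) - 1 = 2 * j + 1 := fun j => by omega
    simp [this]
  -- step 3 : 6 δ v² S1
  have step3 : 6 * δ * v ^ 2 * S1sum aa (2 * m + 1) v
      = ∑ j ∈ Finset.range (2 * m + 2),
          6 * δ * aa j * ((2 * j : ℕ) : ℝ) * v ^ (2 * j + 1) := by
    rw [S1sum, Finset.mul_sum]
    have e1 : ∀ k, 6 * δ * v ^ 2 * (aa k * ((2 * k : ℕ) : ℝ) * v ^ (2 * k - 1))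
        = 6 * δ * aa k * ((2 * k : ℕ) : ℝ) * v ^ (2 * k + 1) := by
      intro k
      rcases k with _ | k
      · simp
      · rw [show 2 * (k + 1) + 1 = (2 * (k + 1) - 1) + 2 from by omega, pow_add]
        ring
    rw [Finset.sum_congr rfl fun k _ => e1 k]
    refine (sum_ext _ (by omega : 2 * m + 1 ≤ 2 * m + 2)
        (fun k hk => by simp [haa0 k hk]) |>.symm).trans ?_
    refine Finset.sum_congr rfl fun j _ => ?_
    rw [show 2 * j + 1 = 2 * j + 1 from rfl]
  -- step 4 : 36 δ a v⁵ St
  have step4 : 36 * δ * a * v ^ 5 * Ssum at' (2 * m - 1) v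
      = ∑ j ∈ Finset.range (2 * m + 2),
          (if j < 2 then 0 else 36 * δ * a * at' (j - 2) * v ^ (2 * j + 1)) := by
    rw [Finset.sum_range_succ' _ (2 * m + 1), Finset.sum_range_succ' _ (2 * m)]
    rw [show (2 * m : ℕ) = (2 * m - 1) + 1 from by omega]
    rw [sum_ext (fun i => if i + 1 + 1 < 2 then (0:ℝ) else
          36 * δ * a * at' (i + 1 + 1 - 2) * v ^ (2 * (i + 1 + 1) + 1))
        (by omega : 2 * m - 1 ≤ 2 * m - 1 + 1)
        (fun k hk => by
          rw [if_neg (by omega), show k + 1 + 1 - 2 = k from by omega, hat0 k (by omega)]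
          ring)]
    rw [Ssum, Finset.mul_sum]
    have : ∀ k, 36 * δ * a * v ^ 5 * (at' k * v ^ (2 * k))
        = if k + 1 + 1 < 2 then (0:ℝ) else 36 * δ * a * at' (k + 1 + 1 - 2) * v ^ (2 * (k + 1 + 1) + 1) := by
      intro k
      rw [if_neg (by omega), show k + 1 + 1 - 2 = k from by omega,
        show 2 * (k + 1 + 1) + 1 = 2 * k + 5 from by omega, show (5:ℕ) = 2 + 3 from rfl]
      ring
    rw [Finset.sum_congr rfl fun k _ => this k]
    norm_num
  rw [step1, step3, step2, step4, ← Finset.sum_sub_distrib, ← Finset.sum_sub_distrib,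
    ← Finset.sum_add_distrib]
  refine Finset.sum_eq_zero fun j hj => ?_
  rcases j with _ | _ | i
  · -- j = 0
    norm_num
  · -- j = 1
    rw [if_pos (by norm_num)]
    have hrec1 := hArec m hm 1 le_rfl (by omega)
    rw [if_pos (by norm_num)] at hrec1
    norm_num at hrec1
    simp only [haa]
    norm_num
    linear_combination (-12 * δ ^ 2 * v ^ 3) * hrec1
  · -- j = i + 2
    have hj' : i + 2 < 2 * m + 2 := by simpa using hj
    rw [if_neg (by omega), show i + 2 - 2 = i from by omega]
    simp only [haa, hat]
    by_cases hle : i + 2 ≤ 2 * m - 1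
    · have hrec := hArec m hm (i + 2) (by omega) hle
      rw [if_neg (by omega), show i + 2 - 2 = i from by omega] at hrec
      have hne : ((i : ℝ) + 2) ≠ 0 := by positivity
      have hrec' : 3 * ((i : ℝ) + 2) * A m (i + 2)
          = ((i : ℝ) + 3) * ((i : ℝ) + 2) * A m (i + 2 + 1) + 9 * a * A (m - 1) i := by
        push_cast at hrec
        field_simp at hrec
        linear_combination hrec
      push_cast [show 2 * (i + 2 + 1) - 1 = 2 * i + 5 from by omega]
      linear_combination (-4 * δ ^ (i + 3) * v ^ (2 * (i + 2) + 1)) * hrec'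
        + (-36 * a * A (m - 1) i * v ^ (2 * (i + 2) + 1) * δ ^ (i + 1)) * hδ2
    · have h1 : A m (i + 2 + 1) = 0 := hAtop m hm _ (by omega)
      rcases (by omega : i + 2 = 2 * m ∨ i + 2 = 2 * m + 1) with he | he
      · -- j = 2m : leading coefficient case
        have hi : ((i : ℝ)) + 2 = 2 * (m : ℝ) := by exact_mod_cast he
        have heq : 24 * (m : ℝ) * A m (i + 2) = 36 * a * A (m - 1) i := by
          rw [show i = 2 * (m - 1) from by omega, show 2 * (m - 1) + 2 = 2 * m from by omega]
          rcases Nat.lt_or_ge 1 m with h2 | h2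
          · have hpow : (3 * a / 2 : ℝ) ^ m = (3 * a / 2) ^ (m - 1) * (3 * a / 2) := by
              rw [← pow_succ, show m - 1 + 1 = m from by omega]
            have hfacn : Nat.factorial m = m * Nat.factorial (m - 1) := by
              conv_lhs => rw [show m = m - 1 + 1 from by omega]
              rw [Nat.factorial_succ, show m - 1 + 1 = m from by omega]
            have hfac : (Nat.factorial m : ℝ) = (m : ℝ) * (Nat.factorial (m - 1) : ℝ) := by
              exact_mod_cast congrArg (Nat.cast (R := ℝ)) hfacn
            rw [hAlead m hm, hAlead (m - 1) (by omega), hpow, hfac]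
            have hm0 : ((m : ℝ)) ≠ 0 := Nat.cast_ne_zero.mpr (by omega)
            have hf0 : ((Nat.factorial (m - 1) : ℕ) : ℝ) ≠ 0 := by
              exact_mod_cast (Nat.factorial_pos (m - 1)).ne'
            field_simp
            ring
          · have hm1 : m = 1 := by omega
            subst hm1
            norm_num
            rw [show (2 : ℕ) = 2 * 1 from rfl, hAlead 1 le_rfl, hA00]
            norm_num [Nat.factorial]
            ring
        rw [h1]
        push_cast [show 2 * (i + 2 + 1) - 1 = 2 * i + 5 from by omega]
        linear_combination (-δ ^ (i + 3) * v ^ (2 * (i + 2) + 1)) * heq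
          + (-36 * a * A (m - 1) i * v ^ (2 * (i + 2) + 1) * δ ^ (i + 1)) * hδ2
          + (-12 * A m (i + 2) * δ ^ (i + 3) * v ^ (2 * (i + 2) + 1)) * hi
      · -- j = 2m + 1 : everything vanishes
        have h2 : A m (i + 2) = 0 := hAtop m hm _ (by omega)
        have h3 : A (m - 1) i = 0 := by
          rcases Nat.lt_or_ge 1 m with h4 | h4
          · exact hAtop (m - 1) (by omega) i (by omega)
          · rw [show m - 1 = 0 from by omega]
            exact hA0k i (by omega)
        rw [h1, h2, h3]
        ring


lemma main_identity (δ a : ℝ) (hδ : δ = 1 ∨ δ = -1) (aa att : ℕ → ℝ) (N Nt : ℕ)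
    (v : ℝ) (hv : 0 < v)
    (hKEY : v * S2sum aa N v - S1sum aa N v - 6 * δ * v ^ 2 * S1sum aa N v
      + 36 * δ * a * v ^ 5 * Ssum att Nt v = 0) :
    (G2 δ aa N v * (1 / (6 * v ^ 2)) + G1 δ aa N v * (-(12 * v) / (6 * v ^ 2) ^ 2))
        * (1 / (6 * v ^ 2))
      + (5 - 36 * v ^ 4) / (144 * v ^ 6) * (v ^ ((1:ℝ) / 2) * Efun δ v * Ssum aa N v)
    = -δ * a * (v ^ ((1:ℝ) / 2) * Efun δ v * Ssum att Nt v) := by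
  have hv0 : v ≠ 0 := hv.ne'
  have hw1 : v ^ ((1:ℝ) / 2 - 1) = v ^ ((1:ℝ) / 2) / v := by
    rw [Real.rpow_sub hv, Real.rpow_one]
  have hw2 : v ^ ((1:ℝ) / 2 - 1 - 1) = v ^ ((1:ℝ) / 2) / v / v := by
    rw [Real.rpow_sub hv, hw1, Real.rpow_one]
  have hS2 : S2sum aa N v = (S1sum aa N v + 6 * δ * v ^ 2 * S1sum aa N v
      - 36 * δ * a * v ^ 5 * Ssum att Nt v) / v := by
    field_simp
    linarith [hKEY]
  unfold G2 G1 Fpoly Fpoly'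
  rw [hS2, hw1, hw2]
  rcases hδ with h | h <;> subst h <;> (field_simp; ring)


lemma hasDerivAt_u (x : ℝ) (hx : 0 < x) :
    HasDerivAt (fun y : ℝ => (y / 2) ^ ((1:ℝ) / 3))
      (1 / (6 * ((x / 2) ^ ((1:ℝ) / 3)) ^ 2)) x := by
  have hx2 : (0:ℝ) < x / 2 := by positivity
  have h1 : HasDerivAt (fun y : ℝ => y / 2) (1 / 2) x := by
    simpa using (hasDerivAt_id x).div_const 2
  have h2 := (Real.hasDerivAt_rpow_const (p := (1:ℝ) / 3) (Or.inl hx2.ne')).comp x h1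
  have e1 : ((x / 2) ^ ((1:ℝ) / 3)) ^ 2 = (x / 2) ^ ((2:ℝ) / 3) := by
    rw [← Real.rpow_natCast ((x / 2) ^ ((1:ℝ) / 3)) 2, ← Real.rpow_mul hx2.le]
    norm_num
  have e2 : (x / 2) ^ ((1:ℝ) / 3 - 1) = ((x / 2) ^ ((2:ℝ) / 3))⁻¹ := by
    rw [show (1:ℝ) / 3 - 1 = -(2 / 3) from by norm_num, Real.rpow_neg hx2.le]
  have e3 : (x / 2) ^ ((2:ℝ) / 3) ≠ 0 := by
    positivity
  refine h2.congr_deriv ?_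
  rw [e1, e2]
  field_simp
  ring
lemma inv6sq (v : ℝ) (hv : 0 < v) :
    HasDerivAt (fun w : ℝ => 1 / (6 * w ^ 2)) (-(12 * v) / (6 * v ^ 2) ^ 2) v := by
  have h := ((hasDerivAt_pow 2 v).const_mul (6:ℝ)).inv (by positivity)
  simp only [one_div]
  refine h.congr_deriv ?_
  ring


end JordanAux


/-- The Jordan chain of generalized eigenfunctions for the Schrödinger potential
`V_0(z) = (5 - 36ζ⁴)/(144ζ⁶)`, `ζ = (z/2)^{1/3}`, associated with the algebraic seed
solution of Painlevé III (D7): the functions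
`ψ_n(z) = ζ^{1/2} e^{-(3/2)δζ²} ∑_{k=0}^{2|n|-2} A(|n|-1,k) δ^k ζ^{2k}` (`δ = sgn n`,
`ψ_0 = 0`) satisfy `ψ_n'' + V_0 ψ_n = -δa ψ_{n-δ}` for all `z > 0`. -/
theorem jordan_chain_algebraic_PIIID7 (a c : ℝ) (ha : a ≠ 0) (hc : c ≠ 0)
    (A : ℕ → ℕ → ℝ)
    (hA00 : A 0 0 = c) (hA0k : ∀ k : ℕ, 1 ≤ k → A 0 k = 0)
    (hAm0 : ∀ m : ℕ, 1 ≤ m → A m 0 = 0)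
    (hAtop : ∀ m : ℕ, 1 ≤ m → ∀ k : ℕ, 2 * m < k → A m k = 0)
    (hAlead : ∀ m : ℕ, 1 ≤ m → A m (2 * m) = (3 * a / 2) ^ m * c / Nat.factorial m)
    (hArec : ∀ m : ℕ, 1 ≤ m → ∀ k : ℕ, 1 ≤ k → k ≤ 2 * m - 1 →
      A m k = (((k : ℝ) + 1) / 3) * A m (k + 1)
        + (if k < 2 then 0 else (3 * a / (k : ℝ)) * A (m - 1) (k - 2)))
    (ψ : ℤ → ℝ → ℝ)
    (hψ0 : ψ 0 = fun _ => 0)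
    (hψ : ∀ n : ℤ, n ≠ 0 → ∀ z : ℝ, ψ n z =
      ((z / 2) ^ ((1 : ℝ) / 3)) ^ ((1 : ℝ) / 2)
        * Real.exp (-(3 / 2) * (n.sign : ℝ) * ((z / 2) ^ ((1 : ℝ) / 3)) ^ 2)
        * ∑ k ∈ Finset.range (2 * n.natAbs - 1),
            A (n.natAbs - 1) k * ((n.sign : ℝ)) ^ k * ((z / 2) ^ ((1 : ℝ) / 3)) ^ (2 * k)) :
    ∀ n : ℤ, n ≠ 0 → ∀ z : ℝ, 0 < z →
      deriv (deriv (ψ n)) z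
          + (5 - 36 * ((z / 2) ^ ((1 : ℝ) / 3)) ^ 4)
              / (144 * ((z / 2) ^ ((1 : ℝ) / 3)) ^ 6) * ψ n z
        = -(n.sign : ℝ) * a * ψ (n - n.sign) z := by
  intro n hn z hz
  have hna : 1 ≤ n.natAbs := Int.natAbs_pos.mpr hn
  set v : ℝ := (z / 2) ^ ((1:ℝ) / 3) with hvdef
  have hv : 0 < v := Real.rpow_pos_of_pos (by positivity) _
  set δ : ℝ := (n.sign : ℝ) with hδdef
  set m : ℕ := n.natAbs - 1 with hmdef
  have hδ : δ = 1 ∨ δ = -1 := by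
    rcases lt_trichotomy n 0 with h | h | h
    · right; rw [hδdef, Int.sign_eq_neg_one_of_neg h]; norm_num
    · exact absurd h hn
    · left; rw [hδdef, Int.sign_eq_one_of_pos h]; norm_num
  have hδ2 : δ ^ 2 = 1 := by rcases hδ with h | h <;> rw [h] <;> norm_num
  have hfun : ψ n = fun x =>
      G0 δ (fun k => A m k * δ ^ k) (2 * m + 1) ((x / 2) ^ ((1:ℝ) / 3)) := by
    funext x
    rw [hψ n hn x, show 2 * n.natAbs - 1 = 2 * m + 1 from by omega, ← hmdef]
    rfl
  have hψ1 : ∀ x, 0 < x → HasDerivAt (ψ n)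
      (G1 δ (fun k => A m k * δ ^ k) (2 * m + 1) ((x / 2) ^ ((1:ℝ) / 3))
        * (1 / (6 * ((x / 2) ^ ((1:ℝ) / 3)) ^ 2))) x := by
    intro x hx
    rw [hfun]
    have hux : (0:ℝ) < (x / 2) ^ ((1:ℝ) / 3) := Real.rpow_pos_of_pos (by positivity) _
    exact (hasDerivAt_G0 δ _ _ _ hux.ne').comp x (hasDerivAt_u x hx)
  have hder1 : deriv (ψ n) =ᶠ[nhds z] fun x =>
      G1 δ (fun k => A m k * δ ^ k) (2 * m + 1) ((x / 2) ^ ((1:ℝ) / 3))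
        * (1 / (6 * ((x / 2) ^ ((1:ℝ) / 3)) ^ 2)) := by
    filter_upwards [eventually_gt_nhds hz] with x hx using (hψ1 x hx).deriv
  have hψ2 : HasDerivAt (fun x =>
      G1 δ (fun k => A m k * δ ^ k) (2 * m + 1) ((x / 2) ^ ((1:ℝ) / 3))
        * (1 / (6 * ((x / 2) ^ ((1:ℝ) / 3)) ^ 2)))
      ((G2 δ (fun k => A m k * δ ^ k) (2 * m + 1) v * (1 / (6 * v ^ 2))
        + G1 δ (fun k => A m k * δ ^ k) (2 * m + 1) v * (-(12 * v) / (6 * v ^ 2) ^ 2))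
        * (1 / (6 * v ^ 2))) z := by
    have hinner := (hasDerivAt_G1 δ (fun k => A m k * δ ^ k) (2 * m + 1) v hv.ne').mul
      (inv6sq v hv)
    exact hinner.comp z (hasDerivAt_u z hz)
  have hDD : deriv (deriv (ψ n)) z
      = (G2 δ (fun k => A m k * δ ^ k) (2 * m + 1) v * (1 / (6 * v ^ 2))
        + G1 δ (fun k => A m k * δ ^ k) (2 * m + 1) v * (-(12 * v) / (6 * v ^ 2) ^ 2))
        * (1 / (6 * v ^ 2)) := by
    rw [hder1.deriv_eq]
    exact hψ2.deriv
  have hψz : ψ n z = v ^ ((1:ℝ) / 2) * Efun δ v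
      * Ssum (fun k => A m k * δ ^ k) (2 * m + 1) v := by
    rw [hfun]
    rfl
  have hRHS : ψ (n - n.sign) z = v ^ ((1:ℝ) / 2) * Efun δ v
      * Ssum (fun k => A (m - 1) k * δ ^ k) (2 * m - 1) v := by
    by_cases hone : n.natAbs = 1
    · have h1 : n = 1 ∨ n = -1 := by omega
      have hn0 : n - n.sign = 0 := by rcases h1 with h | h <;> subst h <;> decide
      rw [hn0, hψ0, show 2 * m - 1 = 0 from by omega]
      simp [Ssum]
    · have h2 : 2 ≤ n.natAbs := by omega
      have hne : n - n.sign ≠ 0 := by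
        rcases lt_trichotomy n 0 with h | h | h
        · rw [Int.sign_eq_neg_one_of_neg h]; omega
        · exact absurd h hn
        · rw [Int.sign_eq_one_of_pos h]; omega
      have hs : (n - n.sign).sign = n.sign := by
        rcases lt_trichotomy n 0 with h | h | h
        · rw [Int.sign_eq_neg_one_of_neg h, Int.sign_eq_neg_one_of_neg (by omega : n - (-1) < 0)]
        · exact absurd h hn
        · rw [Int.sign_eq_one_of_pos h, Int.sign_eq_one_of_pos (by omega : 0 < n - 1)]
      have hna2 : (n - n.sign).natAbs = n.natAbs - 1 := by
        rcases lt_trichotomy n 0 with h | h | h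
        · rw [Int.sign_eq_neg_one_of_neg h]; omega
        · exact absurd h hn
        · rw [Int.sign_eq_one_of_pos h]; omega
      rw [hψ (n - n.sign) hne z, hs, hna2, ← hmdef]
      rfl
  rw [hDD, hψz, hRHS]
  exact main_identity δ a hδ (fun k => A m k * δ ^ k) (fun k => A (m - 1) k * δ ^ k)
    (2 * m + 1) (2 * m - 1) v hv
    (key_identity a c A hA00 hA0k hAtop hAlead hArec m δ hδ2 v)
end

section
/- Let f : ℝ → ℝ be twice differentiable and satisfy the Airy equation f″(w) = w f(w) for all w ∈ ℝ. For z > 0 and λ > 0, set ζ = (z/2)^{1/3}, V_0(z) = (5 − 36ζ⁴)/(144ζ⁶), and define Ψ(z,λ) = λ^{−1/6} ζ^{1/2} f( (9/λ²)^{1/3} (1/4 + λζ²) ). Then for all z > 0 and λ > 0: (i) ∂²Ψ/∂z² + V_0(z) Ψ = λ Ψ; and (ii) ∂Ψ/∂λ = (1/2)( z/λ − ζ/λ² ) ∂Ψ/∂z − (1/4)( 1/λ − 1/(6ζ²λ²) ) Ψ. That is, Ψ solves both equations of the scalar Lax pair for the Painlevé III (D7) equation evaluated at the algebraic seed solution P_0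 = ζ = (z/2)^{1/3} (for which P_0′ = 1/(6ζ²)). -/
/-- Airy-function solution of the scalar Lax pair for Painlevé III (D7) at the
algebraic seed solution `P_0 = ζ = (z/2)^{1/3}` (for which `P_0' = 1/(6ζ²)`), with
associated potential `V_0 = (5 - 36ζ⁴)/(144ζ⁶)`: if `f'' (w) = w f(w)` for all `w`,
then `Ψ(z,λ) = λ^{-1/6} ζ^{1/2} f((9/λ²)^{1/3}(1/4 + λζ²))` satisfies
`Ψ_zz + V_0 Ψ = λΨ` and `Ψ_λ = (1/2)(z/λ - ζ/λ²)Ψ_z - (1/4)(1/λ - 1/(6ζ²λ²))Ψ`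
for all `z > 0`, `λ > 0`. -/
theorem airy_solves_laxpair_PIIID7 (f : ℝ → ℝ)
    (hf1 : Differentiable ℝ f) (hf2 : Differentiable ℝ (deriv f))
    (hAiry : ∀ w : ℝ, deriv (deriv f) w = w * f w)
    (Ψ : ℝ → ℝ → ℝ)
    (hΨ : ∀ z lam : ℝ, Ψ z lam =
      lam ^ (-(1 : ℝ) / 6) * ((z / 2) ^ ((1 : ℝ) / 3)) ^ ((1 : ℝ) / 2)
        * f ((9 / lam ^ 2) ^ ((1 : ℝ) / 3)
            * (1 / 4 + lam * ((z / 2) ^ ((1 : ℝ) / 3)) ^ 2))) :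
    ∀ z lam : ℝ, 0 < z → 0 < lam →
      (deriv (deriv (fun z' => Ψ z' lam)) z
          + (5 - 36 * ((z / 2) ^ ((1 : ℝ) / 3)) ^ 4)
              / (144 * ((z / 2) ^ ((1 : ℝ) / 3)) ^ 6) * Ψ z lam
        = lam * Ψ z lam) ∧
      (deriv (fun l => Ψ z l) lam
        = 1 / 2 * (z / lam - (z / 2) ^ ((1 : ℝ) / 3) / lam ^ 2)
            * deriv (fun z' => Ψ z' lam) z
          - 1 / 4 * (1 / lam - 1 / (6 * ((z / 2) ^ ((1 : ℝ) / 3)) ^ 2 * lam ^ 2))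
            * Ψ z lam) := by
  intro z lam hz hlam
  have hlam0 : lam ≠ 0 := ne_of_gt hlam
  set a : ℝ := (9 / lam ^ 2) ^ ((1 : ℝ) / 3) with ha_def
  set c : ℝ := lam ^ (-(1 : ℝ) / 6) with hc_def
  set s : ℝ → ℝ := fun x => (x / 2) ^ ((1 : ℝ) / 6) with hs_def
  have hb : ∀ x : ℝ, 0 < x → (0:ℝ) < x / 2 := fun x hx => by positivity
  have hspos : ∀ x : ℝ, 0 < x → 0 < s x := fun x hx => Real.rpow_pos_of_pos (hb x hx) _
  have hsne : s z ≠ 0 := (hspos z hz).ne'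
  have spow : ∀ x : ℝ, 0 < x → ∀ n : ℕ, (s x) ^ n = (x / 2) ^ ((n : ℝ) / 6) := by
    intro x hx n
    simp only [hs_def]
    rw [← Real.rpow_natCast ((x/2) ^ ((1:ℝ)/6)) n, ← Real.rpow_mul (hb x hx).le]
    congr 1
    ring
  set W : ℝ → ℝ := fun x => a * (1 / 4 + lam * (s x) ^ 4) with hW_def
  -- Ψ rewritten on the positive reals
  have heq : ∀ x : ℝ, 0 < x → Ψ x lam = c * s x * f (W x) := by
    intro x hx
    have e1 : ((x / 2) ^ ((1:ℝ)/3)) ^ ((1:ℝ)/2) = s x := by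
      simp only [hs_def]
      rw [← Real.rpow_mul (hb x hx).le]
      norm_num
    have e2 : ((x / 2) ^ ((1:ℝ)/3)) ^ (2:ℕ) = (s x) ^ 4 := by
      rw [spow x hx 4, ← Real.rpow_natCast ((x/2) ^ ((1:ℝ)/3)) 2,
        ← Real.rpow_mul (hb x hx).le]
      norm_num
    rw [hΨ x lam, ← hc_def, ← ha_def, e1, e2]
  -- derivative of s
  have hsD : ∀ x : ℝ, 0 < x → HasDerivAt s (1 / (12 * (s x) ^ 5)) x := by
    intro x hx
    have h1 : HasDerivAt (fun y : ℝ => y / 2) (1/2) x := (hasDerivAt_id x).div_const 2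
    have h2 := (Real.hasDerivAt_rpow_const (p := (1:ℝ)/6) (Or.inl (hb x hx).ne')).comp x h1
    simp only [Function.comp_def] at h2
    have h5 : (s x) ^ 5 = (x/2) ^ ((5:ℝ)/6) := by rw [spow x hx 5]; norm_num
    refine h2.congr_deriv ?_
    rw [h5, show (1:ℝ)/6 - 1 = -((5:ℝ)/6) by norm_num, Real.rpow_neg (hb x hx).le]
    ring
  -- derivative of W
  have hWD : ∀ x : ℝ, 0 < x → HasDerivAt W (a * lam / (3 * (s x) ^ 2)) x := by
    intro x hx
    have h := ((((hsD x hx).pow 4).const_mul lam).const_add (1/4)).const_mul a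
    refine h.congr_deriv ?_
    field_simp [(hspos x hx).ne']
    ring
  have hfW : ∀ x : ℝ, 0 < x →
      HasDerivAt (fun y => f (W y)) (deriv f (W x) * (a * lam / (3 * (s x) ^ 2))) x := by
    intro x hx
    have h := ((hf1 (W x)).hasDerivAt).comp x (hWD x hx)
    simpa [Function.comp_def] using h
  set D1 : ℝ → ℝ := fun x =>
    c * (f (W x) / (12 * (s x) ^ 5) + a * lam * deriv f (W x) / (3 * s x)) with hD1_def
  have hg2D : ∀ x : ℝ, 0 < x → HasDerivAt (fun y => c * s y * f (W y)) (D1 x) x := by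
    intro x hx
    have h := (((hsD x hx).const_mul c).mul (hfW x hx))
    refine h.congr_deriv ?_
    simp only [hD1_def]
    field_simp [(hspos x hx).ne']
  -- second derivative : derivative of D1 at z
  have hdfW : HasDerivAt (fun y => deriv f (W y))
      (deriv (deriv f) (W z) * (a * lam / (3 * (s z) ^ 2))) z := by
    have h := ((hf2 (W z)).hasDerivAt).comp z (hWD z hz)
    simpa [Function.comp_def] using h
  set D2 : ℝ := c * (-5 * f (W z) / (144 * (s z) ^ 11)
      + a ^ 2 * lam ^ 2 * (W z * f (W z)) / (9 * (s z) ^ 3)) with hD2_def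
  have hD1D : HasDerivAt D1 D2 z := by
    have hden1 : HasDerivAt (fun y : ℝ => 12 * (s y) ^ 5)
        (12 * ((5:ℕ) * (s z) ^ 4 * (1 / (12 * (s z) ^ 5)))) z := ((hsD z hz).pow 5).const_mul 12
    have hden1ne : 12 * (s z) ^ 5 ≠ 0 := by positivity
    have hq1 := (hfW z hz).div hden1 hden1ne
    have hden2 : HasDerivAt (fun y : ℝ => 3 * s y) (3 * (1 / (12 * (s z) ^ 5))) z :=
      (hsD z hz).const_mul 3
    have hden2ne : 3 * s z ≠ 0 := by positivity
    have hq2 := (hdfW.const_mul (a * lam)).div hden2 hden2ne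
    have h := (hq1.add hq2).const_mul c
    refine h.congr_deriv ?_
    rw [hD2_def, hAiry (W z)]
    field_simp [hsne]
    ring
  -- deriv of Ψ in z equals D1 on positives
  have hderiv1 : ∀ x : ℝ, 0 < x → deriv (fun z' => Ψ z' lam) x = D1 x := by
    intro x hx
    have hev : (fun z' => Ψ z' lam) =ᶠ[nhds x] fun y => c * s y * f (W y) := by
      filter_upwards [isOpen_Ioi.mem_nhds (show x ∈ Set.Ioi (0:ℝ) from hx)] with y hy
      exact heq y hy
    rw [hev.deriv_eq]
    exact (hg2D x hx).deriv
  have hderiv2 : deriv (deriv (fun z' => Ψ z' lam)) z = D2 := by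
    have hev : deriv (fun z' => Ψ z' lam) =ᶠ[nhds z] D1 := by
      filter_upwards [isOpen_Ioi.mem_nhds (show z ∈ Set.Ioi (0:ℝ) from hz)] with y hy
      exact hderiv1 y hy
    rw [hev.deriv_eq]
    exact hD1D.deriv
  have e3 : (z / 2) ^ ((1:ℝ)/3) = (s z) ^ 2 := by
    rw [spow z hz 2]; norm_num
  have ha3 : a ^ 3 * lam ^ 2 = 9 := by
    have h9 : (0:ℝ) < 9 / lam ^ 2 := by positivity
    have : a ^ 3 = 9 / lam ^ 2 := by
      rw [ha_def, ← Real.rpow_natCast ((9/lam^2) ^ ((1:ℝ)/3)) 3, ← Real.rpow_mul h9.le]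
      norm_num
    rw [this]; field_simp
  constructor
  · -- equation (i)
    rw [hderiv2, heq z hz, e3, hD2_def]
    have hkey : a ^ 2 * lam ^ 2 * (W z * f (W z))
        = 9 * ((1 / 4 + lam * (s z) ^ 4) * f (W z)) := by
      have hWz : W z = a * (1 / 4 + lam * (s z) ^ 4) := rfl
      rw [hWz]
      linear_combination ((1/4 + lam * (s z) ^ 4) * f (W z)) * ha3
    rw [hkey]
    field_simp [hsne]
    ring
  · -- equation (ii)
    have e1z : ((z / 2) ^ ((1:ℝ)/3)) ^ ((1:ℝ)/2) = s z := by
      simp only [hs_def]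
      rw [← Real.rpow_mul (hb z hz).le]
      norm_num
    have e2z : ((z / 2) ^ ((1:ℝ)/3)) ^ (2:ℕ) = (s z) ^ 4 := by
      rw [spow z hz 4, ← Real.rpow_natCast ((z/2) ^ ((1:ℝ)/3)) 2,
        ← Real.rpow_mul (hb z hz).le]
      norm_num
    have hgl : (fun l => Ψ z l) = fun l => l ^ (-(1:ℝ)/6) * s z
        * f ((9 / l ^ 2) ^ ((1:ℝ)/3) * (1 / 4 + l * (s z) ^ 4)) := by
      funext l
      rw [hΨ z l, e1z, e2z]
    -- derivative of the lam-dependent pieces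
    have hcD : HasDerivAt (fun l : ℝ => l ^ (-(1:ℝ)/6)) (-(1:ℝ)/6 * lam ^ (-(1:ℝ)/6 - 1)) lam :=
      Real.hasDerivAt_rpow_const (Or.inl hlam0)
    have hinner : HasDerivAt (fun l : ℝ => 9 / l ^ 2) (-(18 / lam ^ 3)) lam := by
      have h := (hasDerivAt_const lam (9:ℝ)).div (hasDerivAt_pow 2 lam) (pow_ne_zero 2 hlam0)
      refine h.congr_deriv ?_
      field_simp
      ring
    have h9 : (0:ℝ) < 9 / lam ^ 2 := by positivity
    have hAD : HasDerivAt (fun l : ℝ => (9 / l ^ 2) ^ ((1:ℝ)/3)) (-(2 * a) / (3 * lam)) lam := by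
      have h := (Real.hasDerivAt_rpow_const (p := (1:ℝ)/3) (Or.inl h9.ne')).comp lam hinner
      simp only [Function.comp_def] at h
      refine h.congr_deriv ?_
      rw [Real.rpow_sub h9, Real.rpow_one, ← ha_def]
      field_simp
      ring
    have hlin : HasDerivAt (fun l : ℝ => 1 / 4 + l * (s z) ^ 4) ((s z) ^ 4) lam := by
      simpa using ((hasDerivAt_id lam).mul_const ((s z) ^ 4)).const_add (1/4 : ℝ)
    have hWlD : HasDerivAt (fun l : ℝ => (9 / l ^ 2) ^ ((1:ℝ)/3) * (1 / 4 + l * (s z) ^ 4))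
        (-(2 * a) / (3 * lam) * (1 / 4 + lam * (s z) ^ 4) + a * (s z) ^ 4) lam := by
      have h := hAD.mul hlin
      exact h
    have harg : (9 / lam ^ 2) ^ ((1:ℝ)/3) * (1 / 4 + lam * (s z) ^ 4) = W z := by
      rw [← ha_def]
    have hfWl : HasDerivAt (fun l : ℝ => f ((9 / l ^ 2) ^ ((1:ℝ)/3) * (1 / 4 + l * (s z) ^ 4)))
        (deriv f (W z) * (-(2 * a) / (3 * lam) * (1 / 4 + lam * (s z) ^ 4) + a * (s z) ^ 4))
        lam := by
      have h := ((hf1 _).hasDerivAt).comp lam hWlD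
      simp only [Function.comp_def] at h
      rw [harg] at h
      exact h
    have hglD : HasDerivAt (fun l : ℝ => l ^ (-(1:ℝ)/6) * s z
        * f ((9 / l ^ 2) ^ ((1:ℝ)/3) * (1 / 4 + l * (s z) ^ 4)))
        ((-(1:ℝ)/6 * lam ^ (-(1:ℝ)/6 - 1)) * s z
            * f ((9 / lam ^ 2) ^ ((1:ℝ)/3) * (1 / 4 + lam * (s z) ^ 4))
          + (lam ^ (-(1:ℝ)/6) * s z)
            * (deriv f (W z)
              * (-(2 * a) / (3 * lam) * (1 / 4 + lam * (s z) ^ 4) + a * (s z) ^ 4))) lam :=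
      (hcD.mul_const (s z)).mul hfWl
    rw [hgl, hglD.deriv, hderiv1 z hz, heq z hz, e3, harg]
    have hc1 : lam ^ (-(1:ℝ)/6 - 1) = c / lam := by
      rw [Real.rpow_sub hlam, Real.rpow_one, hc_def]
    rw [hc1, ← hc_def]
    have h6 : (s z) ^ 6 = z / 2 := by
      rw [spow z hz 6]
      norm_num
    have hz6 : z = 2 * (s z) ^ 6 := by rw [h6]; ring
    simp only [hD1_def]
    set F := f (W z) with hF
    set F1 := deriv f (W z) with hF1
    set σ := s z with hσ
    have hσne : σ ≠ 0 := hsne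
    rw [hz6]
    field_simp [hσne]
    ring
end
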